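/- Let μ be a multiplication on A, with symmetric part ρ(x,y) = μ(x,y) + μ(y,x) and skew-symmetric part ψ(x,y) = μ(x,y) − μ(y,x). Then the cyclic identity A_μ(x,y,z) + A_μ(y,z,x) + A_μ(z,x,y) = 0 holds for all x,y,z ∈ A if and only if ψ satisfies the Jacobi identity and ψ(x,ρ(y,z)) + ψ(y,ρ(z,x)) + ψ(z,ρ(x,y)) = 0 holds for all x,y,z ∈ A. -/
import Mathlib


/-- The associator of a bilinear multiplication. -/
def assocMap {K A : Type*} [Field K] [AddCommGroup A] [Module K A]
    (μ : A →ₗ[K] A →ₗ[K] A) (x y z : A) : A :=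
  μ x (μ y z) - μ (μ x y) z

/-- The symmetric part of a bilinear multiplication. -/
def symPart {K A : Type*} [Field K] [AddCommGroup A] [Module K A]
    (μ : A →ₗ[K] A →ₗ[K] A) (x y : A) : A :=
  μ x y + μ y x

/-- The skew-symmetric part of a bilinear multiplication. -/
def skewPart {K A : Type*} [Field K] [AddCommGroup A] [Module K A]
    (μ : A →ₗ[K] A →ₗ[K] A) (x y : A) : A :=
  μ x y - μ y x

/-- The cyclic identity `A_μ(x,y,z) + A_μ(y,z,x) + A_μ(z,x,y) = 0` holds iff the
skew-symmetric part `ψ` satisfies the Jacobi identity and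
`ψ(x,ρ(y,z)) + ψ(y,ρ(z,x)) + ψ(z,ρ(x,y)) = 0`, `ρ` being the symmetric part. -/
theorem cyclic_polarization {K A : Type*} [Field K] [CharZero K]
    [AddCommGroup A] [Module K A]
    (μ : A →ₗ[K] A →ₗ[K] A) :
    (∀ x y z : A, assocMap μ x y z + assocMap μ y z x + assocMap μ z x y = 0) ↔
    ((∀ x y z : A,
        skewPart μ x (skewPart μ y z) + skewPart μ y (skewPart μ z x) +
          skewPart μ z (skewPart μ x y) = 0) ∧
     (∀ x y z : A,
        skewPart μ x (symPart μ y z) + skewPart μ y (symPart μ z x) +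
          skewPart μ z (symPart μ x y) = 0)) := by
  constructor
  · intro h
    constructor
    · intro x y z
      have key : skewPart μ x (skewPart μ y z) + skewPart μ y (skewPart μ z x) +
          skewPart μ z (skewPart μ x y) =
          (assocMap μ x y z + assocMap μ y z x + assocMap μ z x y) -
          (assocMap μ y x z + assocMap μ x z y + assocMap μ z y x) := by
        simp only [assocMap, skewPart, map_add, map_sub, LinearMap.add_apply,
          LinearMap.sub_apply]
        abel
      rw [key, h x y z, h y x z, sub_zero]
    · intro x y z
      have key : skewPart μ x (symPart μ y z) + skewPart μ y (symPart μ z x) +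
          skewPart μ z (symPart μ x y) =
          (assocMap μ x y z + assocMap μ y z x + assocMap μ z x y) +
          (assocMap μ y x z + assocMap μ x z y + assocMap μ z y x) := by
        simp only [assocMap, skewPart, symPart, map_add, map_sub, LinearMap.add_apply,
          LinearMap.sub_apply]
        abel
      rw [key, h x y z, h y x z, add_zero]
  · rintro ⟨hJ, hM⟩ x y z
    set E := assocMap μ x y z + assocMap μ y z x + assocMap μ z x y with hE
    have key : E + E =
        (skewPart μ x (skewPart μ y z) + skewPart μ y (skewPart μ z x) +
          skewPart μ z (skewPart μ x y)) +
        (skewPart μ x (symPart μ y z) + skewPart μ y (symPart μ z x) +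
          skewPart μ z (symPart μ x y)) := by
      simp only [hE, assocMap, skewPart, symPart, map_add, map_sub, LinearMap.add_apply,
        LinearMap.sub_apply]
      abel
    rw [hJ x y z, hM x y z, add_zero] at key
    have h2 : (2 : K) • E = 0 := by rw [two_smul, key]
    rcases smul_eq_zero.mp h2 with h | h
    · exact absurd h (by norm_num)
    · exact h
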